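/- Lemma (the weights are non-decreasing). For every p ∈ [0.869, 1] and every ℓ ∈ {0, 1, …, 7}, one has ŵ_{ℓ+1} ≥ ŵ_ℓ (equivalently f(ℓ) ≥ 0 for ℓ = 0, 1, …, 7); in particular f(5) ≥ 0 for p ∈ [0.850, 1], f(6) ≥ 0 for p ∈ [0.865, 1], and f(7) ≥ 0 for p ∈ [0.869, 1]. -/

import Mathlib

open scoped Classical

/-- The weight sequence `ŵ` from the fast-convergence analysis of Rational Pavlov:
`ŵ_0 = 0`, `ŵ_1 = 1`, `ŵ_2 = 1`, and for `ℓ ≥ 2`,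
`ŵ_{ℓ+1} = −p(2−p)·(∑_{i=0}^{ℓ−2} ŵ_i) − p(1−p)·ŵ_{ℓ−1}
           − (1/2)·(ℓ(p²−2p) − (p²−2p+2))·ŵ_ℓ`. -/
noncomputable def wHat (p : ℝ) : ℕ → ℝ
  | 0 => 0
  | 1 => 1
  | 2 => 1
  | (m + 3) =>
      -p * (2 - p) * ((Finset.range (m + 1)).attach.sum fun i => wHat p i.1)
        - p * (1 - p) * wHat p (m + 1)
        - (1 / 2) * (((m : ℝ) + 2) * (p ^ 2 - 2 * p) - (p ^ 2 - 2 * p + 2)) * wHat p (m + 2)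
  termination_by ℓ => ℓ
  decreasing_by
  · have := Finset.mem_range.mp i.2; omega
  · omega
  · omega

/-- `g(ℓ) = ŵ_ℓ / ℓ`. -/
noncomputable def gSeq (p : ℝ) (ℓ : ℕ) : ℝ := wHat p ℓ / ℓ

/-- `h(ℓ) = g(ℓ+1) − g(ℓ)`. -/
noncomputable def hSeq (p : ℝ) (ℓ : ℕ) : ℝ := gSeq p (ℓ + 1) - gSeq p ℓ

/-- `f(ℓ) = ŵ_{ℓ+1} − ŵ_ℓ`. -/
noncomputable def fSeq (p : ℝ) (ℓ : ℕ) : ℝ := wHat p (ℓ + 1) - wHat p ℓ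

lemma wHat_succ (p : ℝ) (m : ℕ) :
    wHat p (m + 3) =
      -p * (2 - p) * ((Finset.range (m + 1)).sum (wHat p))
        - p * (1 - p) * wHat p (m + 1)
        - (1 / 2) * (((m : ℝ) + 2) * (p ^ 2 - 2 * p) - (p ^ 2 - 2 * p + 2)) * wHat p (m + 2) := by
  rw [wHat, Finset.sum_attach]

lemma w0 (p : ℝ) : wHat p 0 = 0 := by rw [wHat]
lemma w1 (p : ℝ) : wHat p 1 = 1 := by rw [wHat]
lemma w2 (p : ℝ) : wHat p 2 = 1 := by rw [wHat]
lemma w3 (p : ℝ) : wHat p 3 = 1 + p^2/2 := by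
  rw [show (3:ℕ) = 0+3 from rfl, wHat_succ]
  simp [Finset.sum_range_succ, w0, w1, w2]; ring
lemma w4 (p : ℝ) : wHat p 4 = 1 - p + 3/2*p^2 + p^3 - 1/2*p^4 := by
  rw [show (4:ℕ) = 1+3 from rfl, wHat_succ]
  simp [Finset.sum_range_succ, w0, w1, w2, w3]; ring
lemma w5 (p : ℝ) : wHat p 5 = 1 - 3*p + 13/2*p^3 + 3/4*p^4 - 3*p^5 + 3/4*p^6 := by
  rw [show (5:ℕ) = 2+3 from rfl, wHat_succ]
  simp [Finset.sum_range_succ, w0, w1, w2, w3, w4]; ring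
lemma w6 (p : ℝ) : wHat p 6 = 1 - 6*p - 9*p^2 + 9*p^3 + 111/4*p^4 - 23/2*p^5 - 53/4*p^6 + 9*p^7 - 3/2*p^8 := by
  rw [show (6:ℕ) = 3+3 from rfl, wHat_succ]
  simp [Finset.sum_range_succ, w0, w1, w2, w3, w4, w5]; ring
lemma w7 (p : ℝ) : wHat p 7 = 1 - 10*p - 63/2*p^2 - 29*p^3 + 355/4*p^4 + 225/2*p^5
    - 1095/8*p^6 - 129/4*p^7 + 619/8*p^8 - 30*p^9 + 15/4*p^10 := by
  rw [show wHat p 7 = wHat p (4+3) from rfl, wHat_succ]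
  simp [Finset.sum_range_succ, w0, w1, w2, w3, w4, w5, w6]; ring
lemma w8 (p : ℝ) : wHat p 8 = 1 - 15*p - 149/2*p^2 - 193*p^3 - 87/4*p^4 + 2881/4*p^5
    + 2539/8*p^6 - 4775/4*p^7 + 273*p^8 + 1083/2*p^9 - 3279/8*p^10 + 225/2*p^11 - 45/4*p^12 := by
  rw [show (8:ℕ) = 5+3 from rfl, wHat_succ]
  simp [Finset.sum_range_succ, w0, w1, w2, w3, w4, w5, w6, w7]; ring

lemma pow_chain (q c : ℝ) (h0 : 0 ≤ q) (h1 : q ≤ c) (k : ℕ) : q^(k+1) ≤ c * q^k := by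
  calc q^(k+1) = q * q^k := by ring
  _ ≤ c * q^k := mul_le_mul_of_nonneg_right h1 (pow_nonneg h0 k)

lemma aux_f3 (p : ℝ) (h1 : (0.869:ℝ) ≤ p) (h2 : p ≤ 1) : wHat p 3 ≤ wHat p 4 := by
  rw [w3, w4]
  have h0 : (0:ℝ) ≤ p - 869/1000 := by linarith
  have h1' : p - 869/1000 ≤ 131/1000 := by linarith
  linarith [pow_chain (p-869/1000) (131/1000) h0 h1' 2, pow_chain (p-869/1000) (131/1000) h0 h1' 3,
    pow_nonneg h0 2, pow_nonneg h0 3, pow_nonneg h0 4]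

lemma aux_f4 (p : ℝ) (h1 : (0.869:ℝ) ≤ p) (h2 : p ≤ 1) : wHat p 4 ≤ wHat p 5 := by
  rw [w4, w5]
  have h0 : (0:ℝ) ≤ p - 869/1000 := by linarith
  have h1' : p - 869/1000 ≤ 131/1000 := by linarith
  linarith [pow_chain (p-869/1000) (131/1000) h0 h1' 2, pow_chain (p-869/1000) (131/1000) h0 h1' 3,
    pow_chain (p-869/1000) (131/1000) h0 h1' 4, pow_chain (p-869/1000) (131/1000) h0 h1' 5,
    pow_nonneg h0 2, pow_nonneg h0 3, pow_nonneg h0 4, pow_nonneg h0 5, pow_nonneg h0 6]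

lemma aux_f5 (p : ℝ) (h1 : (0.850:ℝ) ≤ p) (h2 : p ≤ 1) : wHat p 5 ≤ wHat p 6 := by
  rw [w5, w6]
  have h0 : (0:ℝ) ≤ p - 17/20 := by linarith
  have h1' : p - 17/20 ≤ 3/20 := by linarith
  linarith [pow_chain (p-17/20) (3/20) h0 h1' 2, pow_chain (p-17/20) (3/20) h0 h1' 3,
    pow_chain (p-17/20) (3/20) h0 h1' 4, pow_chain (p-17/20) (3/20) h0 h1' 5,
    pow_chain (p-17/20) (3/20) h0 h1' 6, pow_chain (p-17/20) (3/20) h0 h1' 7,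
    pow_nonneg h0 2, pow_nonneg h0 3, pow_nonneg h0 4, pow_nonneg h0 5,
    pow_nonneg h0 6, pow_nonneg h0 7, pow_nonneg h0 8]

lemma aux_f6 (p : ℝ) (h1 : (0.865:ℝ) ≤ p) (h2 : p ≤ 1) : wHat p 6 ≤ wHat p 7 := by
  rw [w6, w7]
  have h0 : (0:ℝ) ≤ p - 173/200 := by linarith
  have h1' : p - 173/200 ≤ 27/200 := by linarith
  linarith [pow_chain (p-173/200) (27/200) h0 h1' 2, pow_chain (p-173/200) (27/200) h0 h1' 3,
    pow_chain (p-173/200) (27/200) h0 h1' 4, pow_chain (p-173/200) (27/200) h0 h1' 5,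
    pow_chain (p-173/200) (27/200) h0 h1' 6, pow_chain (p-173/200) (27/200) h0 h1' 7,
    pow_chain (p-173/200) (27/200) h0 h1' 8, pow_chain (p-173/200) (27/200) h0 h1' 9,
    pow_nonneg h0 2, pow_nonneg h0 3, pow_nonneg h0 4, pow_nonneg h0 5,
    pow_nonneg h0 6, pow_nonneg h0 7, pow_nonneg h0 8, pow_nonneg h0 9, pow_nonneg h0 10]

lemma aux_f7 (p : ℝ) (h1 : (0.869:ℝ) ≤ p) (h2 : p ≤ 1) : wHat p 7 ≤ wHat p 8 := by
  rw [w7, w8]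
  have h0 : (0:ℝ) ≤ p - 869/1000 := by linarith
  have h1' : p - 869/1000 ≤ 131/1000 := by linarith
  linarith [pow_chain (p-869/1000) (131/1000) h0 h1' 2, pow_chain (p-869/1000) (131/1000) h0 h1' 3,
    pow_chain (p-869/1000) (131/1000) h0 h1' 4, pow_chain (p-869/1000) (131/1000) h0 h1' 5,
    pow_chain (p-869/1000) (131/1000) h0 h1' 6, pow_chain (p-869/1000) (131/1000) h0 h1' 7,
    pow_chain (p-869/1000) (131/1000) h0 h1' 8, pow_chain (p-869/1000) (131/1000) h0 h1' 9,
    pow_chain (p-869/1000) (131/1000) h0 h1' 10, pow_chain (p-869/1000) (131/1000) h0 h1' 11,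
    pow_nonneg h0 2, pow_nonneg h0 3, pow_nonneg h0 4, pow_nonneg h0 5,
    pow_nonneg h0 6, pow_nonneg h0 7, pow_nonneg h0 8, pow_nonneg h0 9,
    pow_nonneg h0 10, pow_nonneg h0 11, pow_nonneg h0 12]

/-- **The weights are non-decreasing.** For every `p ∈ [0.869, 1]` and `ℓ ∈ {0, …, 7}`
one has `ŵ_{ℓ+1} ≥ ŵ_ℓ`, i.e. `f(ℓ) ≥ 0`; in particular `f(5) ≥ 0` on `[0.850, 1]`,
`f(6) ≥ 0` on `[0.865, 1]` and `f(7) ≥ 0` on `[0.869, 1]`. -/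
theorem wHat_nondecreasing :
    (∀ p : ℝ, p ∈ Set.Icc (0.869 : ℝ) 1 →
        ∀ ℓ : ℕ, ℓ ≤ 7 → wHat p ℓ ≤ wHat p (ℓ + 1)) ∧
      (∀ p : ℝ, p ∈ Set.Icc (0.850 : ℝ) 1 → 0 ≤ fSeq p 5) ∧
      (∀ p : ℝ, p ∈ Set.Icc (0.865 : ℝ) 1 → 0 ≤ fSeq p 6) ∧
      (∀ p : ℝ, p ∈ Set.Icc (0.869 : ℝ) 1 → 0 ≤ fSeq p 7) := by
  refine ⟨?_, ?_, ?_, ?_⟩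
  · rintro p ⟨h1, h2⟩ ℓ hℓ
    interval_cases ℓ
    · rw [w0, w1]; norm_num
    · rw [w1, w2]
    · rw [w2, w3]; nlinarith [sq_nonneg p]
    · exact aux_f3 p h1 h2
    · exact aux_f4 p h1 h2
    · exact aux_f5 p (by norm_num at h1 ⊢; linarith) h2
    · exact aux_f6 p (by norm_num at h1 ⊢; linarith) h2
    · exact aux_f7 p h1 h2
  · rintro p ⟨h1, h2⟩
    have := aux_f5 p h1 h2
    simp only [fSeq]; linarith
  · rintro p ⟨h1, h2⟩
    have := aux_f6 p h1 h2
    simp only [fSeq]; linarith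
  · rintro p ⟨h1, h2⟩
    have := aux_f7 p h1 h2
    simp only [fSeq]; linarith
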